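/- (Impulse response bound) Let k ≥ 1, Γ ∈ [0,1), and let coefficients c_{t,i} ≥ 0 for t ∈ ℕ, i ∈ {1,...,k} satisfy Σ_{i=1}^k c_{t,i} ≤ Γ for every t. Fix τ ≥ 1 and define the impulse response sequence (r̃_t) by r̃_t = 0 for t < τ, r̃_τ = 1, and r̃_t = Σ_{i=1}^k c_{t,i} r̃_{t-i} for t > τ. Then for every t > τ it holds that 0 ≤ r̃_t ≤ Γ^{⌈(t−τ)/k⌉}. -/

import Mathlib

/-!
STATEMENT 7 (Impulse response bound): for the impulse response `r̃` of the linear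
recurrence with nonnegative coefficients `c_{t,i}` satisfying `∑_{i=1}^k c_{t,i} ≤ Γ < 1`
(i.e. `r̃_t = 0` for `t < τ`, `r̃_τ = 1`, `r̃_t = ∑_{i=1}^k c_{t,i} r̃_{t-i}` for `t > τ`),
we have `0 ≤ r̃_t ≤ Γ^{⌈(t−τ)/k⌉}` for every `t > τ`.
-/
theorem impulse_response_bound
    (k : ℕ) (hk : 1 ≤ k)
    (Γ : ℝ) (hΓ0 : 0 ≤ Γ) (hΓ1 : Γ < 1)
    (c : ℤ → ℕ → ℝ)
    (hc : ∀ (t : ℤ) (i : ℕ), 1 ≤ i → i ≤ k → 0 ≤ c t i)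
    (hcsum : ∀ t : ℤ, ∑ i ∈ Finset.Icc 1 k, c t i ≤ Γ)
    (τ : ℤ) (hτ : 1 ≤ τ)
    (rt : ℤ → ℝ)
    (h0 : ∀ t : ℤ, t < τ → rt t = 0)
    (h1 : rt τ = 1)
    (hrec : ∀ t : ℤ, τ < t → rt t = ∑ i ∈ Finset.Icc 1 k, c t i * rt (t - i)) :
    ∀ t : ℤ, τ < t →
      0 ≤ rt t ∧ rt t ≤ Γ ^ (⌈((t - τ : ℤ) : ℚ) / (k : ℚ)⌉).toNat := by
  have hk' : (0 : ℚ) < (k : ℚ) := by exact_mod_cast hk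
  -- main induction on n with t = τ + n
  have key : ∀ n : ℕ, 0 ≤ rt (τ + n) ∧
      rt (τ + n) ≤ Γ ^ (⌈((n : ℚ)) / (k : ℚ)⌉).toNat := by
    intro n
    induction n using Nat.strong_induction_on with
    | _ n ih =>
      rcases Nat.eq_zero_or_pos n with rfl | hn
      · simp [h1]
      · have ht : τ < τ + n := by
          have : (0:ℤ) < n := by exact_mod_cast hn
          omega
        set M : ℕ := (⌈((n : ℚ)) / (k : ℚ)⌉).toNat with hM
        have hM1 : 1 ≤ M := by
          have : (1 : ℤ) ≤ ⌈((n : ℚ)) / (k : ℚ)⌉ := by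
            apply Int.le_ceil_iff.mpr
            simp only [Int.cast_one, sub_self]
            positivity
          omega
        -- bound each term rt (τ + n - i) for 1 ≤ i ≤ k
        have hterm : ∀ i ∈ Finset.Icc 1 k,
            0 ≤ rt (τ + n - i) ∧ rt (τ + n - i) ≤ Γ ^ (M - 1) := by
          intro i hi
          simp only [Finset.mem_Icc] at hi
          by_cases hin : i ≤ n
          · have heq : (τ + n - i : ℤ) = τ + ((n - i : ℕ) : ℤ) := by
              push_cast [hin]; ring
            obtain ⟨ih0, ih1⟩ := ih (n - i) (by omega)
            rw [heq]
            refine ⟨ih0, ih1.trans ?_⟩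
            apply pow_le_pow_of_le_one hΓ0 hΓ1.le
            -- M - 1 ≤ exponent of n - i
            have hceil : (⌈((n : ℚ)) / (k : ℚ)⌉ : ℤ) ≤ ⌈(((n - i : ℕ) : ℚ)) / (k : ℚ)⌉ + 1 := by
              have : ((n : ℚ)) / (k : ℚ) ≤ (((n - i : ℕ) : ℚ)) / (k : ℚ) + 1 := by
                rw [div_add' _ _ _ (ne_of_gt hk'), div_le_div_iff_of_pos_right hk']
                have : ((n - i : ℕ) : ℚ) = (n : ℚ) - (i : ℚ) := by push_cast [hin]; ring
                rw [this]
                have : (i : ℚ) ≤ (k : ℚ) := by exact_mod_cast hi.2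
                linarith
              calc (⌈((n : ℚ)) / (k : ℚ)⌉ : ℤ) ≤ ⌈(((n - i : ℕ) : ℚ)) / (k : ℚ) + 1⌉ :=
                    Int.ceil_le_ceil this
                _ = ⌈(((n - i : ℕ) : ℚ)) / (k : ℚ)⌉ + 1 := by
                    exact Int.ceil_add_one _
            have hnonneg : (0 : ℤ) ≤ ⌈(((n - i : ℕ) : ℚ)) / (k : ℚ)⌉ := by
              apply Int.ceil_nonneg; positivity
            omega
          · have : (τ + n - i : ℤ) < τ := by
              have : (n : ℤ) < i := by exact_mod_cast Nat.lt_of_not_le hin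
              omega
            rw [h0 _ this]
            exact ⟨le_refl 0, by positivity⟩
        rw [hrec _ ht]
        constructor
        · apply Finset.sum_nonneg
          intro i hi
          simp only [Finset.mem_Icc] at hi
          exact mul_nonneg (hc _ _ hi.1 hi.2) (hterm i (by simp [Finset.mem_Icc, hi])).1
        · calc ∑ i ∈ Finset.Icc 1 k, c (τ + n) i * rt (τ + n - i)
              ≤ ∑ i ∈ Finset.Icc 1 k, c (τ + n) i * Γ ^ (M - 1) := by
                apply Finset.sum_le_sum
                intro i hi
                have hii := Finset.mem_Icc.mp hi
                exact mul_le_mul_of_nonneg_left (hterm i hi).2 (hc _ _ hii.1 hii.2)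
            _ = (∑ i ∈ Finset.Icc 1 k, c (τ + n) i) * Γ ^ (M - 1) := by
                rw [Finset.sum_mul]
            _ ≤ Γ * Γ ^ (M - 1) := by
                apply mul_le_mul_of_nonneg_right (hcsum _) (by positivity)
            _ = Γ ^ M := by
                rw [← pow_succ']
                congr 1
                omega
  intro t ht
  have hn : t = τ + ((t - τ).toNat : ℤ) := by omega
  have := key (t - τ).toNat
  rw [← hn] at this
  have hcast : ((t - τ : ℤ) : ℚ) = (((t - τ).toNat : ℕ) : ℚ) := by
    exact_mod_cast (Int.toNat_of_nonneg (by omega : (0:ℤ) ≤ t - τ)).symm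
  rw [hcast]
  exact this
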